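/- For a fuzzy graph G on n vertices, γ_s(G) = γ_snR(G) if and only if G has no strong edges (i.e., G is the empty fuzzy graph on its vertex set, with all vertices isolated in the strong-neighbor sense). -/

import Mathlib

noncomputable section
open scoped Classical
open Finset

/-- A fuzzy graph on a vertex set `V`. -/
structure FuzzyGraph (V : Type*) where
  σ : V → ℝ
  μ : V → V → ℝ
  σ_nonneg : ∀ v, 0 ≤ σ v
  σ_le_one : ∀ v, σ v ≤ 1
  μ_nonneg : ∀ u v, 0 ≤ μ u v
  μ_symm : ∀ u v, μ u v = μ v u
  μ_le : ∀ u v, μ u v ≤ min (σ u) (σ v)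
  μ_irrefl : ∀ v, μ v v = 0

namespace FuzzyGraph

variable {V : Type*} (G : FuzzyGraph V)

/-- The strength of a walk (given as its list of vertices): the minimum
membership value of its edges (1 for walks without edges). -/
def walkStrength (l : List V) : ℝ :=
  ((l.zip l.tail).map fun p => G.μ p.1 p.2).foldr min 1

/-- `l` is a `u`–`v` walk: it starts at `u`, ends at `v`, and consecutive
vertices are joined by edges of positive membership. -/
def IsWalk (u v : V) (l : List V) : Prop :=
  l.head? = some u ∧ l.getLast? = some v ∧ l.Chain' (fun a b => 0 < G.μ a b)

/-- `CONN_G(u,v)`: the maximum strength over all `u`–`v` paths. -/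
def conn (u v : V) : ℝ :=
  sSup {s | ∃ l : List V, G.IsWalk u v l ∧ 2 ≤ l.length ∧ s = G.walkStrength l}

/-- The edge `(u,v)` is strong. -/
def StrongEdge (u v : V) : Prop :=
  0 < G.μ u v ∧ G.μ u v = G.conn u v

/-- `μ_s(u)`: the minimum membership value among strong edges at `u`
(`0` if `u` has no strong neighbor, via `Real.sInf_empty`). -/
def mus (u : V) : ℝ :=
  sInf {x | ∃ v, G.StrongEdge u v ∧ x = G.μ u v}

/-- The strong neighborhood degree `d_SN(v)`. -/
def dSN [Fintype V] (v : V) : ℝ :=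
  ∑ u ∈ Finset.univ.filter (fun u => G.StrongEdge v u), G.σ u

/-- `D` is a strong dominating set. -/
def IsStrongDomSet (D : Finset V) : Prop :=
  ∀ v, v ∉ D → ∃ u ∈ D, G.StrongEdge v u

/-- The weight of a strong dominating set. -/
def domWeight (D : Finset V) : ℝ := ∑ u ∈ D, G.mus u

/-- The strong domination number `γ_s(G)`. -/
def gammaS [Fintype V] : ℝ :=
  sInf {w | ∃ D : Finset V, G.IsStrongDomSet D ∧ w = G.domWeight D}

/-- `f` is a strong-neighbors Roman dominating function (SNRDF). -/
def IsSNRDF (f : V → ℕ) : Prop :=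
  (∀ v, f v ≤ 2) ∧ ∀ v, f v = 0 → ∃ u, G.StrongEdge v u ∧ f u = 2

/-- The weight of an SNRDF. -/
def snrdfWeight [Fintype V] (f : V → ℕ) : ℝ := ∑ v, (f v : ℝ) * G.mus v

/-- The strong-neighbors Roman domination number `γ_snR(G)`. -/
def gammaSnR [Fintype V] : ℝ :=
  sInf {w | ∃ f : V → ℕ, G.IsSNRDF f ∧ w = G.snrdfWeight f}

/-- The fuzzy subgraph induced by the vertices satisfying `p`. -/
def induce (p : V → Prop) : FuzzyGraph {v // p v} where
  σ v := G.σ v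
  μ u v := G.μ u v
  σ_nonneg v := G.σ_nonneg v
  σ_le_one v := G.σ_le_one v
  μ_nonneg u v := G.μ_nonneg u v
  μ_symm u v := G.μ_symm u v
  μ_le u v := G.μ_le u v
  μ_irrefl v := G.μ_irrefl v

/-- The minimum membership value among the strong edges of `G`. -/
def muMin : ℝ := sInf {x | ∃ u v, G.StrongEdge u v ∧ x = G.μ u v}

/-- The complement of a fuzzy graph. -/
def compl : FuzzyGraph V where
  σ := G.σ
  μ u v := if u = v then 0 else min (G.σ u) (G.σ v) - G.μ u v
  σ_nonneg := G.σ_nonneg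
  σ_le_one := G.σ_le_one
  μ_nonneg u v := by
    by_cases h : u = v
    · simp [h]
    · simp only [if_neg h, sub_nonneg]
      exact G.μ_le u v
  μ_symm u v := by
    by_cases h : u = v
    · simp [h]
    · have h' : ¬ v = u := fun hh => h hh.symm
      simp only [if_neg h, if_neg h', min_comm (G.σ u), G.μ_symm u v]
  μ_le u v := by
    by_cases h : u = v
    · subst h
      simp only [if_pos rfl, le_min_iff]
      exact ⟨G.σ_nonneg u, G.σ_nonneg u⟩
    · simp only [if_neg h]
      have := G.μ_nonneg u v
      linarith
  μ_irrefl v := by simp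

end FuzzyGraph

namespace FuzzyGraphAux
open FuzzyGraph

variable {V : Type*} (G : FuzzyGraph V)

lemma zip_tail_dropLast {α : Type*} : ∀ l : List α, l.zip l.tail = l.dropLast.zip l.tail
  | [] => rfl
  | [_] => rfl
  | a :: b :: t => by
    simp only [List.tail_cons, List.dropLast_cons₂, List.zip_cons_cons]
    exact congrArg _ (zip_tail_dropLast (b :: t))

lemma foldr_min_reverse (l : List ℝ) (b : ℝ) : l.reverse.foldr min b = l.foldr min b := by
  rw [List.foldr_reverse]
  have : (fun (x y : ℝ) => min y x) = min := by funext x y; exact min_comm y x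
  rw [this, List.foldl_eq_foldr]

lemma dropLast_reverse' {α : Type*} (l : List α) : l.reverse.dropLast = l.tail.reverse := by
  have := List.tail_reverse (l := l.reverse)
  rw [List.reverse_reverse] at this
  rw [this, List.reverse_reverse]

lemma walkStrength_reverse (l : List V) : G.walkStrength l.reverse = G.walkStrength l := by
  unfold FuzzyGraph.walkStrength
  rw [zip_tail_dropLast l.reverse, List.tail_reverse,
    dropLast_reverse']
  have hlen : l.tail.length = l.dropLast.length := by
    simp [List.length_tail, List.length_dropLast]
  have hzip : l.tail.reverse.zip l.dropLast.reverse = (l.tail.zip l.dropLast).reverse := by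
    simpa only [List.zip] using (List.reverse_zipWith (f := Prod.mk) hlen).symm
  rw [hzip]
  have hswap : l.tail.zip l.dropLast = (l.dropLast.zip l.tail).map Prod.swap := by
    rw [List.zip_swap]
  rw [List.map_reverse, foldr_min_reverse, hswap, List.map_map]
  have : ((fun p : V × V => G.μ p.1 p.2) ∘ Prod.swap) = fun p : V × V => G.μ p.1 p.2 := by
    funext p; exact G.μ_symm p.2 p.1
  rw [this, ← zip_tail_dropLast]

lemma isWalk_reverse {u v : V} {l : List V} (h : G.IsWalk u v l) : G.IsWalk v u l.reverse := by
  obtain ⟨h1, h2, h3⟩ := h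
  refine ⟨?_, ?_, ?_⟩
  · rw [List.head?_reverse]; exact h2
  · rw [List.getLast?_reverse]; exact h1
  · unfold List.Chain' at h3 ⊢
    rw [List.isChain_reverse]
    exact h3.imp fun a b hab => by simpa [flip, G.μ_symm a b] using hab

lemma conn_symm (u v : V) : G.conn u v = G.conn v u := by
  have key : ∀ a b : V,
      {s | ∃ l : List V, G.IsWalk a b l ∧ 2 ≤ l.length ∧ s = G.walkStrength l} ⊆
      {s | ∃ l : List V, G.IsWalk b a l ∧ 2 ≤ l.length ∧ s = G.walkStrength l} := by
    rintro a b s ⟨l, hw, hlen, rfl⟩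
    exact ⟨l.reverse, isWalk_reverse G hw, by simpa using hlen,
      (walkStrength_reverse G l).symm⟩
  unfold FuzzyGraph.conn
  exact congrArg sSup (le_antisymm (key u v) (key v u))

lemma strongEdge_symm {u v : V} (h : G.StrongEdge u v) : G.StrongEdge v u := by
  obtain ⟨h1, h2⟩ := h
  refine ⟨by rwa [G.μ_symm v u], ?_⟩
  rw [G.μ_symm v u, conn_symm G v u]
  exact h2

lemma mus_nonneg (u : V) : 0 ≤ G.mus u := by
  apply Real.sInf_nonneg
  rintro x ⟨v, _, rfl⟩
  exact G.μ_nonneg u v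

lemma mus_pos [Fintype V] {u v : V} (h : G.StrongEdge u v) : 0 < G.mus u := by
  classical
  set S : Set ℝ := {x | ∃ w, G.StrongEdge u w ∧ x = G.μ u w}
  have hne : S.Nonempty := ⟨G.μ u v, v, h, rfl⟩
  have hfin : S.Finite := by
    apply Set.Finite.subset (Set.finite_range (G.μ u))
    rintro x ⟨w, _, rfl⟩; exact ⟨w, rfl⟩
  have := hne.csInf_mem hfin
  obtain ⟨w, hw, hEq⟩ := this
  rw [FuzzyGraph.mus]
  show 0 < sInf S
  rw [hEq]
  exact hw.1

lemma mus_eq_zero {u : V} (h : ∀ v, ¬ G.StrongEdge u v) : G.mus u = 0 := by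
  have : {x | ∃ v, G.StrongEdge u v ∧ x = G.μ u v} = ∅ := by
    ext x; simp only [Set.mem_setOf_eq, Set.mem_empty_iff_false, iff_false]
    rintro ⟨v, hv, _⟩; exact h v hv
  rw [FuzzyGraph.mus, this, Real.sInf_empty]

lemma domWeight_nonneg [Fintype V] (D : Finset V) : 0 ≤ G.domWeight D :=
  Finset.sum_nonneg fun u _ => mus_nonneg G u

lemma univ_isStrongDomSet [Fintype V] : G.IsStrongDomSet (Finset.univ : Finset V) :=
  fun v hv => absurd (Finset.mem_univ v) hv

lemma gammaS_le [Fintype V] {D : Finset V} (hD : G.IsStrongDomSet D) :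
    G.gammaS ≤ G.domWeight D := by
  exact csInf_le ⟨0, by rintro w ⟨E, _, rfl⟩; exact domWeight_nonneg G E⟩ ⟨D, hD, rfl⟩

end FuzzyGraphAux


open FuzzyGraphAux in
lemma gammaS_lt_gammaSnR {V : Type*} [Fintype V] (G : FuzzyGraph V)
    {a b : V} (hab : G.StrongEdge a b) : G.gammaS < G.gammaSnR := by
  classical
  set P : Finset V := Finset.univ.filter (fun v => 0 < G.mus v) with hP
  have haP : a ∈ P := Finset.mem_filter.mpr ⟨Finset.mem_univ a, mus_pos G hab⟩
  have hPne : P.Nonempty := ⟨a, haP⟩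
  set m : ℝ := P.inf' hPne G.mus with hm
  have hm_pos : 0 < m := by
    obtain ⟨c, hc, hceq⟩ := Finset.exists_mem_eq_inf' hPne G.mus
    rw [hm, hceq]
    exact (Finset.mem_filter.mp hc).2
  have hm_le : ∀ v : V, 0 < G.mus v → m ≤ G.mus v := fun v hv =>
    Finset.inf'_le _ (Finset.mem_filter.mpr ⟨Finset.mem_univ v, hv⟩)
  have hba : b ≠ a := by
    intro h; subst h
    have h1 := hab.1
    rw [G.μ_irrefl] at h1
    exact lt_irrefl 0 h1
  have key : ∀ w ∈ {w | ∃ f : V → ℕ, G.IsSNRDF f ∧ w = G.snrdfWeight f},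
      G.gammaS + m ≤ w := by
    rintro w ⟨f, ⟨hf2, hf0⟩, rfl⟩
    by_cases hcase : ∃ v, f v = 2 ∧ 0 < G.mus v
    · obtain ⟨v₀, hv₀2, hv₀pos⟩ := hcase
      set D : Finset V := Finset.univ.filter (fun v => 0 < f v) with hD
      have hDdom : G.IsStrongDomSet D := by
        intro v hv
        have hfv : f v = 0 := by
          by_contra h
          exact hv (Finset.mem_filter.mpr ⟨Finset.mem_univ v, Nat.pos_of_ne_zero h⟩)
        obtain ⟨u, hu, hu2⟩ := hf0 v hfv
        exact ⟨u, Finset.mem_filter.mpr ⟨Finset.mem_univ u, by omega⟩, hu⟩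
      have hv₀D : v₀ ∈ D := Finset.mem_filter.mpr ⟨Finset.mem_univ v₀, by omega⟩
      have h1 : G.domWeight D + G.mus v₀ ≤ G.snrdfWeight f := by
        have hsub : ∑ v ∈ D, (f v : ℝ) * G.mus v ≤ G.snrdfWeight f := by
          apply Finset.sum_le_sum_of_subset_of_nonneg (Finset.subset_univ D)
          intro v _ _
          exact mul_nonneg (by positivity) (mus_nonneg G v)
        have hsplit : G.domWeight D + G.mus v₀ ≤ ∑ v ∈ D, (f v : ℝ) * G.mus v := by
          rw [FuzzyGraph.domWeight]
          have : ∑ v ∈ D, (f v : ℝ) * G.mus v - ∑ v ∈ D, G.mus v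
              = ∑ v ∈ D, ((f v : ℝ) - 1) * G.mus v := by
            rw [← Finset.sum_sub_distrib]
            congr 1; funext v; ring
          have hterm : ∀ v ∈ D, 0 ≤ ((f v : ℝ) - 1) * G.mus v := by
            intro v hvD
            have : 0 < f v := (Finset.mem_filter.mp hvD).2
            have : (1 : ℝ) ≤ (f v : ℕ) := by exact_mod_cast this
            exact mul_nonneg (by linarith) (mus_nonneg G v)
          have hone : G.mus v₀ ≤ ∑ v ∈ D, ((f v : ℝ) - 1) * G.mus v := by
            have := Finset.single_le_sum hterm hv₀D
            rw [hv₀2] at this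
            push_cast at this
            linarith
          linarith
        linarith
      have := gammaS_le G hDdom
      have hmv : m ≤ G.mus v₀ := hm_le v₀ hv₀pos
      linarith
    · push_neg at hcase
      have hmus0 : ∀ v, f v = 2 → G.mus v = 0 := fun v hv =>
        le_antisymm (hcase v hv) (mus_nonneg G v)
      have hfpos : ∀ v, 0 < f v := by
        intro v
        by_contra h
        have hfv : f v = 0 := Nat.eq_zero_of_not_pos h
        obtain ⟨u, hu, hu2⟩ := hf0 v hfv
        have : 0 < G.mus u := mus_pos G (strongEdge_symm G hu)
        rw [hmus0 u hu2] at this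
        exact lt_irrefl 0 this
      have hsumle : ∑ v : V, G.mus v ≤ G.snrdfWeight f := by
        apply Finset.sum_le_sum
        intro v _
        have h1 : (1 : ℝ) ≤ (f v : ℕ) := by exact_mod_cast hfpos v
        nlinarith [mus_nonneg G v]
      set D : Finset V := Finset.univ.erase a with hD
      have hDdom : G.IsStrongDomSet D := by
        intro v hv
        have hva : v = a := by
          by_contra h
          exact hv (Finset.mem_erase.mpr ⟨h, Finset.mem_univ v⟩)
        subst hva
        exact ⟨b, Finset.mem_erase.mpr ⟨hba, Finset.mem_univ b⟩, hab⟩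
      have hDw : G.domWeight D = ∑ v : V, G.mus v - G.mus a := by
        rw [FuzzyGraph.domWeight, hD]
        have := Finset.sum_erase_add Finset.univ G.mus (Finset.mem_univ a)
        linarith
      have := gammaS_le G hDdom
      have hma : m ≤ G.mus a := hm_le a (mus_pos G hab)
      rw [hDw] at this
      linarith
  have hTne : {w | ∃ f : V → ℕ, G.IsSNRDF f ∧ w = G.snrdfWeight f}.Nonempty := by
    refine ⟨G.snrdfWeight (fun _ => 2), ⟨fun _ => 2, ⟨fun _ => le_refl 2, ?_⟩, rfl⟩⟩
    intro v hv
    exact absurd hv (by norm_num)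
  have : G.gammaS + m ≤ G.gammaSnR := le_csInf hTne key
  linarith

/-- `γ_s(G) = γ_snR(G)` iff `G` has no strong edges. -/
theorem gammaS_eq_gammaSnR_iff_no_strongEdge {V : Type*} [Fintype V]
    (G : FuzzyGraph V) :
    G.gammaS = G.gammaSnR ↔ ∀ u v : V, ¬ G.StrongEdge u v := by
  classical
  constructor
  · intro hEq
    by_contra h
    push_neg at h
    obtain ⟨u, v, huv⟩ := h
    exact absurd hEq (ne_of_lt (gammaS_lt_gammaSnR G huv))
  · intro h
    have hmus : ∀ v, G.mus v = 0 := fun v => FuzzyGraphAux.mus_eq_zero G (h v)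
    have hS : G.gammaS = 0 := by
      have : {w | ∃ D : Finset V, G.IsStrongDomSet D ∧ w = G.domWeight D} = {0} := by
        ext w
        simp only [Set.mem_setOf_eq, Set.mem_singleton_iff]
        constructor
        · rintro ⟨D, _, rfl⟩
          simp [FuzzyGraph.domWeight, hmus]
        · rintro rfl
          exact ⟨Finset.univ, FuzzyGraphAux.univ_isStrongDomSet G,
            by simp [FuzzyGraph.domWeight, hmus]⟩
      rw [FuzzyGraph.gammaS, this, csInf_singleton]
    have hR : G.gammaSnR = 0 := by
      have : {w | ∃ f : V → ℕ, G.IsSNRDF f ∧ w = G.snrdfWeight f} = {0} := by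
        ext w
        simp only [Set.mem_setOf_eq, Set.mem_singleton_iff]
        constructor
        · rintro ⟨f, _, rfl⟩
          simp [FuzzyGraph.snrdfWeight, hmus]
        · rintro rfl
          refine ⟨fun _ => 2, ⟨fun _ => le_refl 2, fun v hv => absurd hv (by norm_num)⟩,
            by simp [FuzzyGraph.snrdfWeight, hmus]⟩
      rw [FuzzyGraph.gammaSnR, this, csInf_singleton]
    rw [hS, hR]
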